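/- arXiv:2312.09905 — 3 statements merged into one kernel-verified Lean document; each statement's English description precedes it below -/
import Mathlib

section
/- If F is a final spanning outforest of a digraph D (i.e., a spanning outforest such that for every arc (u,v) of D that is backward with respect to F, F contains a directed path from v to u), then for every i, the set L_i(F) of vertices at level i in F is a stable (independent) set in the underlying graph of D. -/
/-- A final spanning outforest of a digraph `D` on vertex set `V`, encoded by a
parent function and a level function.  Arcs of the forest go from `parent v` to `v`,
are arcs of `D`, roots have level 1, levels increase along arcs, and for every
backward arc `(u,v)` of `D` (i.e. with `level u ≥ level v`) the forest contains a
directed path from `v` to `u`. -/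
structure FinalOutForest (V : Type*) (D : V → V → Prop) where
  parent : V → Option V
  level : V → ℕ
  parent_arc : ∀ u v : V, parent v = some u → D u v
  level_root : ∀ v : V, parent v = none → level v = 1
  level_parent : ∀ u v : V, parent v = some u → level v = level u + 1
  final : ∀ u v : V, D u v → level v ≤ level u →
    Relation.ReflTransGen (fun a b => parent b = some a) v u

/-- In a final spanning outforest of a simple digraph, every level set `L_i(F)` is
a stable set of the underlying graph of `D`. -/
theorem level_sets_stable {V : Type*} (D : V → V → Prop)
    (hsimple : ∀ x : V, ¬ D x x)
    (F : FinalOutForest V D) (i : ℕ) :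
    ∀ u v : V, F.level u = i → F.level v = i → ¬ D u v := by
  intro u v hu hv hD
  have hle : F.level v ≤ F.level u := by omega
  have hpath := F.final u v hD hle
  have key : ∀ a b : V,
      Relation.ReflTransGen (fun a b => F.parent b = some a) a b →
      a = b ∨ F.level a < F.level b := by
    intro a b h
    induction h with
    | refl => exact Or.inl rfl
    | tail _ hstep ih =>
      rename_i c d _
      have := F.level_parent c d hstep
      rcases ih with rfl | hlt <;> right <;> omega
  rcases key v u hpath with rfl | hlt
  · exact hsimple v hD
  · omega
end

section
/- Every digraph D admits a final spanning outforest, i.e., a spanning outforest F such that for every arc (u,v) of D with l_F(u) ≥ l_F(v), F contains a directed path from v to u. -/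
/-- Every (finite) digraph admits a final spanning outforest. -/
theorem exists_final_spanning_outforest {V : Type*} [Fintype V] (D : V → V → Prop) :
    Nonempty (FinalOutForest V D) := by
  classical
  let Good : (V → Option V) → (V → ℕ) → Prop := fun p l =>
    (∀ u v, p v = some u → D u v) ∧ (∀ v, p v = none → l v = 1) ∧
    (∀ u v, p v = some u → l v = l u + 1)
  -- every level function of a good pair is bounded by the number of vertices
  have hbound : ∀ p l, Good p l → ∀ v : V, l v ≤ Fintype.card V := by
    intro p l hg v
    have key : ∀ m (v : V), l v = m → ∀ k, 1 ≤ k → k ≤ m → ∃ w, l w = k := by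
      intro m
      induction m using Nat.strong_induction_on with
      | _ m ih =>
        intro v hv k hk1 hk2
        rcases eq_or_lt_of_le hk2 with h | h
        · exact ⟨v, by omega⟩
        · cases hp : p v with
          | none => have := hg.2.1 v hp; omega
          | some a =>
            have ha := hg.2.2 a v hp
            exact ih (l a) (by omega) a rfl k hk1 (by omega)
    have hsub : Finset.Icc 1 (l v) ⊆ Finset.univ.image l := by
      intro k hk
      simp only [Finset.mem_Icc] at hk
      obtain ⟨w, hw⟩ := key (l v) v rfl k hk.1 hk.2
      exact Finset.mem_image.2 ⟨w, Finset.mem_univ w, hw⟩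
    have h1 := Finset.card_le_card hsub
    have h2 : (Finset.univ.image l).card ≤ Fintype.card V :=
      Finset.card_image_le.trans (by simp)
    simp only [Nat.card_Icc] at h1
    omega
  let T : Set ℕ := {s | ∃ p l, Good p l ∧ ∑ v : V, l v = s}
  have hT0 : (∑ _v : V, 1) ∈ T :=
    ⟨fun _ => none, fun _ => 1,
      ⟨fun u v h => by simp at h, fun _ _ => rfl, fun u v h => by simp at h⟩, rfl⟩
  have hTbdd : BddAbove T := by
    refine ⟨Fintype.card V * Fintype.card V, ?_⟩
    rintro s ⟨p, l, hg, rfl⟩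
    calc ∑ v : V, l v ≤ ∑ _v : V, Fintype.card V :=
          Finset.sum_le_sum fun v _ => hbound p l hg v
      _ = Fintype.card V * Fintype.card V := by
          simp [Finset.sum_const, mul_comm]
  obtain ⟨p, l, hg, hsum⟩ := Nat.sSup_mem ⟨_, hT0⟩ hTbdd
  refine ⟨⟨p, l, hg.1, hg.2.1, hg.2.2, ?_⟩⟩
  intro u v huv hlev
  by_contra hpath
  set desc : V → Prop := fun w => Relation.ReflTransGen (fun a b => p b = some a) v w
    with hdesc
  have hdv : desc v := Relation.ReflTransGen.refl
  have hdu : ¬ desc u := hpath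
  set δ := l u + 1 - l v with hδ
  have hδ1 : 1 ≤ δ := by omega
  set p' : V → Option V := fun w => if w = v then some u else p w with hp'
  set l' : V → ℕ := fun w => if desc w then l w + δ else l w with hl'
  have hstep : ∀ a w, p w = some a → desc a → desc w := fun a w h ha => ha.tail h
  have hstep' : ∀ w, desc w → w ≠ v → ∃ a, p w = some a ∧ desc a := by
    intro w hw hne
    rcases Relation.ReflTransGen.cases_tail hw with h | ⟨c, hc, hcw⟩
    · exact absurd h hne
    · exact ⟨c, hcw, hc⟩
  have hgood' : Good p' l' := by
    refine ⟨?_, ?_, ?_⟩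
    · intro a w h
      by_cases hw : w = v
      · subst hw
        simp only [hp', if_pos rfl, Option.some.injEq] at h
        subst h; exact huv
      · simp only [hp', if_neg hw] at h
        exact hg.1 a w h
    · intro w h
      have hw : w ≠ v := by
        intro hwv; subst hwv; simp [hp'] at h
      simp only [hp', if_neg hw] at h
      have hnd : ¬ desc w := by
        intro hd
        obtain ⟨a, ha, -⟩ := hstep' w hd hw
        rw [h] at ha; exact nomatch ha
      simp only [hl', if_neg hnd]
      exact hg.2.1 w h
    · intro a w h
      by_cases hw : w = v
      · subst hw
        simp only [hp', if_pos rfl, Option.some.injEq] at h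
        subst h
        simp only [hl', if_pos hdv, if_neg hdu]
        omega
      · simp only [hp', if_neg hw] at h
        have hlw := hg.2.2 a w h
        by_cases hd : desc w
        · obtain ⟨a', ha', hda'⟩ := hstep' w hd hw
          rw [h] at ha'
          obtain rfl : a = a' := by injection ha'
          simp only [hl', if_pos hd, if_pos hda']
          omega
        · have hnda : ¬ desc a := fun hda => hd (hstep a w h hda)
          simp only [hl', if_neg hd, if_neg hnda]
          exact hlw
  have hle : ∑ w : V, l' w ≤ sSup T := le_csSup hTbdd ⟨p', l', hgood', rfl⟩
  have hlt : ∑ w : V, l w < ∑ w : V, l' w := by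
    apply Finset.sum_lt_sum
    · intro w _
      by_cases hd : desc w
      · simp only [hl', if_pos hd]; omega
      · simp only [hl', if_neg hd]; omega
    · exact ⟨v, Finset.mem_univ v, by simp only [hl', if_pos hdv]; omega⟩
  omega
end

section
/- Every digraph with chromatic number at least n contains every directed (one-block) path of length n−1. -/
open Relation

namespace GallaiRoyAux

variable {V : Type*}

def rel (A : Set (V × V)) : V → V → Prop := fun a b => (a, b) ∈ A

/-- `Wk R v m` : there is a directed walk of length `m` in `R` starting at `v`. -/
def Wk (R : V → V → Prop) (v : V) (m : ℕ) : Prop :=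
  ∃ x : ℕ → V, x 0 = v ∧ ∀ i < m, R (x i) (x (i + 1))

lemma walk_transGen {R : V → V → Prop} {x : ℕ → V} {m : ℕ}
    (hx : ∀ i < m, R (x i) (x (i + 1))) {i j : ℕ} (hij : i < j) (hj : j ≤ m) :
    TransGen R (x i) (x j) := by
  induction j with
  | zero => omega
  | succ j ih =>
    rcases Nat.lt_or_ge i j with hlt | hge
    · exact (ih hlt (by omega)).tail (hx j (by omega))
    · have : i = j := by omega
      subst this
      exact TransGen.single (hx i (by omega))

lemma transGen_walk {R : V → V → Prop} {a b : V} (h : TransGen R a b) :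
    ∃ ℓ, 0 < ℓ ∧ ∃ x : ℕ → V, x 0 = a ∧ x ℓ = b ∧ ∀ i < ℓ, R (x i) (x (i + 1)) := by
  induction h with
  | @single c hab =>
    refine ⟨1, one_pos, fun i => if i = 0 then a else c, by simp, by simp, ?_⟩
    intro i hi
    have hi0 : i = 0 := by omega
    subst hi0
    simpa using hab
  | @tail b c _ hbc ih =>
    obtain ⟨ℓ, hℓ, x, hx0, hxl, hxs⟩ := ih
    refine ⟨ℓ + 1, by omega, fun i => if i ≤ ℓ then x i else c, by simp [hx0], by simp, ?_⟩
    intro i hi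
    rcases Nat.lt_or_ge i ℓ with hlt | hge
    · simpa [Nat.le_of_lt hlt, Nat.succ_le_of_lt hlt] using hxs i hlt
    · have hil : i = ℓ := by omega
      subst hil
      simpa [hxl] using hbc

lemma transGen_insert {R : V → V → Prop} {u v a b : V}
    (h : TransGen (fun x y => R x y ∨ (x = u ∧ y = v)) a b) :
    TransGen R a b ∨ (ReflTransGen R a u ∧ ReflTransGen R v b) := by
  induction h with
  | single hab =>
    rcases hab with hab | ⟨rfl, rfl⟩
    · exact Or.inl (TransGen.single hab)
    · exact Or.inr ⟨ReflTransGen.refl, ReflTransGen.refl⟩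
  | tail _ hbc ih =>
    rcases hbc with hbc | ⟨rfl, rfl⟩
    · rcases ih with h1 | ⟨h1, h2⟩
      · exact Or.inl (h1.tail hbc)
      · exact Or.inr ⟨h1, h2.tail hbc⟩
    · rcases ih with h1 | ⟨h1, _⟩
      · exact Or.inr ⟨h1.to_reflTransGen, ReflTransGen.refl⟩
      · exact Or.inr ⟨h1, ReflTransGen.refl⟩

lemma transGen_sUnion {c : Set (Set (V × V))} (hc : IsChain (· ⊆ ·) c) {a b : V}
    (h : TransGen (rel (⋃₀ c)) a b) : ∃ A ∈ c, TransGen (rel A) a b := by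
  induction h with
  | single hab =>
    obtain ⟨A, hA, hmem⟩ := hab
    exact ⟨A, hA, TransGen.single hmem⟩
  | tail _ hbc ih =>
    obtain ⟨A, hA, hAt⟩ := ih
    obtain ⟨B, hB, hmem⟩ := hbc
    rcases hc.total hA hB with hAB | hBA
    · exact ⟨B, hB, (TransGen.mono (fun x y hxy => hAB hxy) _ _ hAt).tail hmem⟩
    · exact ⟨A, hA, hAt.tail (hBA hmem)⟩

end GallaiRoyAux

/-- `HasDirPath D k` : the digraph `D` contains a directed path with `k` arcs. -/
def HasDirPath {V : Type*} (D : V → V → Prop) (k : ℕ) : Prop :=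
  ∃ x : Fin (k + 1) → V, Function.Injective x ∧
    ∀ i : ℕ, ∀ _ : i < k, D (x ⟨i, by omega⟩) (x ⟨i + 1, by omega⟩)

/-- Gallai–Roy: every digraph with chromatic number at least `n` contains the
directed path of length `n - 1`. -/
theorem gallai_roy_universal {V : Type*} (D : V → V → Prop) (n : ℕ) (hn : 1 ≤ n)
    (h : (n : ℕ∞) ≤ (SimpleGraph.fromRel D).chromaticNumber) :
    HasDirPath D (n - 1) := by
  open GallaiRoyAux in
  by_contra hcon
  set k := n - 1 with hk
  -- V is nonempty
  have hV : Nonempty V := by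
    by_contra hV
    have hcol : (SimpleGraph.fromRel D).Colorable 0 :=
      ⟨SimpleGraph.Coloring.mk (fun v => (hV ⟨v⟩).elim) (fun {a} => (hV ⟨a⟩).elim)⟩
    have := h.trans hcol.chromaticNumber_le
    have : n ≤ 0 := by exact_mod_cast this
    omega
  obtain ⟨v0⟩ := hV
  -- k ≥ 1
  have hk1 : 1 ≤ k := by
    rcases Nat.eq_zero_or_pos k with h0 | h1
    · exfalso
      apply hcon
      rw [h0]
      exact ⟨fun _ => v0, fun i j _ => Fin.ext (by omega),
        fun i hi => absurd hi (by omega)⟩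
    · exact h1
  -- maximal acyclic subdigraph via Zorn
  let S : Set (Set (V × V)) :=
    {A | (∀ p ∈ A, D p.1 p.2) ∧ ∀ a : V, ¬ TransGen (GallaiRoyAux.rel A) a a}
  obtain ⟨M, -, hMmax⟩ := zorn_subset_nonempty S (fun c hcS hc _ => by
    refine ⟨⋃₀ c, ⟨?_, ?_⟩, fun s hs => Set.subset_sUnion_of_mem hs⟩
    · rintro p ⟨A, hA, hp⟩
      exact (hcS hA).1 p hp
    · intro a ha
      obtain ⟨A, hA, hAt⟩ := GallaiRoyAux.transGen_sUnion hc ha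
      exact (hcS hA).2 a hAt) ∅ ⟨fun p hp => absurd hp (Set.notMem_empty p), fun a ha => by
        cases ha with
        | single hmem => exact absurd hmem (Set.notMem_empty _)
        | tail _ hmem => exact absurd hmem (Set.notMem_empty _)⟩
  have hMS : M ∈ S := hMmax.1
  have hsub : ∀ p ∈ M, D p.1 p.2 := hMS.1
  have hacy : ∀ a : V, ¬ TransGen (GallaiRoyAux.rel M) a a := hMS.2
  set R := GallaiRoyAux.rel M with hR
  -- walks in R are short
  have hbdd : ∀ v m, GallaiRoyAux.Wk R v m → m < k := by
    rintro v m ⟨x, hx0, hxs⟩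
    by_contra hge
    push_neg at hge
    apply hcon
    refine ⟨fun i => x i.val, ?_, fun i hi => hsub _ (hxs i (by omega))⟩
    intro i j hij
    replace hij : x i.val = x j.val := hij
    by_contra hne
    have hvne : (i : ℕ) ≠ (j : ℕ) := fun hval => hne (Fin.ext hval)
    rcases hvne.lt_or_gt with hlt | hlt
    · have := GallaiRoyAux.walk_transGen hxs hlt (le_trans (Nat.le_of_lt_succ j.isLt) hge)
      rw [hij] at this
      exact hacy _ this
    · have := GallaiRoyAux.walk_transGen hxs hlt (le_trans (Nat.le_of_lt_succ i.isLt) hge)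
      rw [hij] at this
      exact hacy _ this
  -- the coloring function
  set f : V → ℕ := fun v => sSup {m | GallaiRoyAux.Wk R v m} with hf
  have hmem : ∀ v, GallaiRoyAux.Wk R v (f v) := by
    intro v
    have h0 : GallaiRoyAux.Wk R v 0 := ⟨fun _ => v, rfl, fun i hi => absurd hi (by omega)⟩
    have := Nat.sSup_mem (s := {m | GallaiRoyAux.Wk R v m}) ⟨0, h0⟩
      ⟨k, fun m hm => (hbdd v m hm).le⟩
    exact this
  have hflt : ∀ v, f v < k := fun v => hbdd v (f v) (hmem v)
  -- key: TransGen from a to b forces a strictly larger value at a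
  have key : ∀ a b, TransGen R a b → f b + 1 ≤ f a := by
    intro a b hab
    obtain ⟨ℓ, hℓ, x, hx0, hxl, hxs⟩ := GallaiRoyAux.transGen_walk hab
    obtain ⟨y, hy0, hys⟩ := hmem b
    have hwalk : GallaiRoyAux.Wk R a (ℓ + f b) := by
      refine ⟨fun i => if i < ℓ then x i else y (i - ℓ), by simp [hℓ, hx0], ?_⟩
      intro i hi
      rcases Nat.lt_or_ge i ℓ with hlt | hge
      · rcases Nat.lt_or_ge (i + 1) ℓ with hlt2 | hge2
        · simpa [hlt, hlt2] using hxs i hlt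
        · have : i + 1 = ℓ := by omega
          have h2 : y (i + 1 - ℓ) = x (i + 1) := by
            rw [this]; simpa [hy0] using hxl.symm
          simp only [hlt, if_pos, if_neg (by omega : ¬ i + 1 < ℓ), h2]
          exact hxs i hlt
      · have h1 : ¬ i < ℓ := by omega
        have h2 : ¬ i + 1 < ℓ := by omega
        have h3 : i + 1 - ℓ = (i - ℓ) + 1 := by omega
        simp only [h1, h2, if_neg, if_false, h3]
        exact hys (i - ℓ) (by omega)
    have : ℓ + f b ≤ f a :=
      le_csSup ⟨k, fun m hm => (hbdd a m (by exact hm)).le⟩ (by exact hwalk)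
    omega
  -- maximality consequence
  have hmaxarc : ∀ u w, D u w → (u, w) ∉ M → ReflTransGen R w u := by
    intro u w hD hnM
    have hins : insert (u, w) M ∉ S := by
      intro hmem'
      exact hnM (hMmax.2 hmem' (Set.subset_insert _ _) (Set.mem_insert _ _))
    have : ∃ a : V, TransGen (GallaiRoyAux.rel (insert (u, w) M)) a a := by
      by_contra hno
      push_neg at hno
      exact hins ⟨by rintro p (rfl | hp); exacts [hD, hsub p hp], hno⟩
    obtain ⟨a, ha⟩ := this
    have ha' : TransGen (fun x y => R x y ∨ (x = u ∧ y = w)) a a := by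
      refine TransGen.mono (fun x y hxy => ?_) _ _ ha
      rcases hxy with hxy | hxy
      · exact Or.inr ⟨congrArg Prod.fst hxy, congrArg Prod.snd hxy⟩
      · exact Or.inl hxy
    rcases GallaiRoyAux.transGen_insert ha' with h1 | ⟨h1, h2⟩
    · exact absurd h1 (hacy a)
    · exact h2.trans h1
  -- f gives distinct values on arcs between distinct vertices
  have harc : ∀ u w, u ≠ w → D u w → f u ≠ f w := by
    intro u w hne hD
    by_cases hM : (u, w) ∈ M
    · have := key u w (TransGen.single hM)
      omega
    · have hrt := hmaxarc u w hD hM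
      rcases Relation.reflTransGen_iff_eq_or_transGen.mp hrt with rfl | ht
      · exact absurd rfl hne
      · have := key w u ht
        omega
  -- build the coloring
  have hcol : (SimpleGraph.fromRel D).Colorable k := by
    refine ⟨SimpleGraph.Coloring.mk (fun v => (⟨f v, hflt v⟩ : Fin k)) ?_⟩
    intro a b hadj
    rw [SimpleGraph.fromRel_adj] at hadj
    obtain ⟨hne, hD | hD⟩ := hadj
    · exact fun hfeq => harc a b hne hD (by simpa using congrArg Fin.val hfeq)
    · exact fun hfeq => harc b a (Ne.symm hne) hD (by simpa using (congrArg Fin.val hfeq).symm)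
  have := h.trans hcol.chromaticNumber_le
  have : n ≤ k := by exact_mod_cast this
  omega
end
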